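/- Let f : ℝ^n → ℝ^n satisfy the Lipschitz condition locally on ℝ^n, let H = ∏_{i=1}^n [a_i, b_i] ⊆ ℝ^n be a rectangle with a_i < b_i for all i, and let E ⊆ H. Let H'_1 and H'_2 be rectangles such that the interiors of H, H'_1, H'_2 are pairwise disjoint and F_1 := H ∩ H'_1 and F_2 := H ∩ H'_2 are facets of H with F_1 ≠ F_2. Then Focal(H,E,F_1) ∩ Focal(H,E,F_2) = ∅ (focal sets taken with respect to the neighbours H'_1, H'_2 respectively), and moreover Focal(H,E,∅) ∩ Focal(H,E,F_1) = ∅. In other words, the focal subsets of E associated with distinct targets in Facets(H) ∪ {∅} are pairwise disjoint. -/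

import Mathlib

open Set Filter Topology

/-- The rectangle `∏ i, [a i, b i]` in `ℝ^n` (with the Euclidean norm). -/
def boxE (n : ℕ) (a b : Fin n → ℝ) : Set (EuclideanSpace ℝ (Fin n)) :=
  {x | ∀ i, x i ∈ Set.Icc (a i) (b i)}

/-- The facet of the rectangle `∏ i, [a i, b i]` w.r.t. variable `i`:
the upper facet `{x ∈ H | x i = b i}` for `s = true`,
the lower facet `{x ∈ H | x i = a i}` for `s = false`. -/
def facetE (n : ℕ) (a b : Fin n → ℝ) (i : Fin n) (s : Bool) :
    Set (EuclideanSpace ℝ (Fin n)) :=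
  {x ∈ boxE n a b | x i = if s then b i else a i}

/-- `y` is a solution of the autonomous system `ẋ = f(x)` on the set `J ⊆ ℝ`. -/
def IsSolOnE (n : ℕ) (f : EuclideanSpace ℝ (Fin n) → EuclideanSpace ℝ (Fin n))
    (y : ℝ → EuclideanSpace ℝ (Fin n)) (J : Set ℝ) : Prop :=
  ∀ t ∈ J, HasDerivAt y (f (y t)) t

/-- The focal subset `Focal(H, E, F')` of `E ⊆ H` on the rectangle `H = ∏ i, [a i, b i]`
targeting the facet `F'` of `H` indexed by `(i, s)`, where the neighbouring rectangle
`H'` across `F'` is `∏ j, [a' j, b' j]`. -/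
def focalFacetE (n : ℕ) (f : EuclideanSpace ℝ (Fin n) → EuclideanSpace ℝ (Fin n))
    (a b a' b' : Fin n → ℝ) (E : Set (EuclideanSpace ℝ (Fin n))) (i : Fin n) (s : Bool) :
    Set (EuclideanSpace ℝ (Fin n)) :=
  {y₀ ∈ E | ∃ y : ℝ → EuclideanSpace ℝ (Fin n), y 0 = y₀ ∧ ∃ ε ε' c : ℝ,
    0 < ε ∧ 0 < ε' ∧ 0 < c ∧
    IsSolOnE n f y (Set.Icc 0 (c + ε')) ∧
    (∀ t ∈ Set.Ioo 0 c, y t ∈ boxE n a b) ∧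
    (∀ t ∈ Set.Ioo 0 ε, y t ∈ interior (boxE n a b)) ∧
    y c ∈ facetE n a b i s ∧
    (∀ t ∈ Set.Ioo c (c + ε'), y t ∈ interior (boxE n a' b'))}

/-- The focal subset `Focal(H, E, ∅)` of `E` on the rectangle `H = ∏ i, [a i, b i]` not
leaving `H`. -/
def focalStayE (n : ℕ) (f : EuclideanSpace ℝ (Fin n) → EuclideanSpace ℝ (Fin n))
    (a b : Fin n → ℝ) (E : Set (EuclideanSpace ℝ (Fin n))) :
    Set (EuclideanSpace ℝ (Fin n)) :=
  {y₀ ∈ E | ∃ y : ℝ → EuclideanSpace ℝ (Fin n), y 0 = y₀ ∧ IsSolOnE n f y (Set.Ici 0) ∧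
    ∀ t > (0 : ℝ), y t ∈ boxE n a b}

/-- Each coordinate is bounded by the Euclidean norm. -/
lemma coordAbs {n : ℕ} (x : EuclideanSpace ℝ (Fin n)) (i : Fin n) : |x i| ≤ ‖x‖ := by
  rw [EuclideanSpace.norm_eq, Real.le_sqrt (abs_nonneg _)]
  · calc |x i|^2 = ‖x i‖^2 := by rw [Real.norm_eq_abs]
    _ ≤ ∑ j, ‖x j‖^2 := Finset.single_le_sum (f := fun j => ‖x j‖^2)
        (fun j _ => sq_nonneg _) (Finset.mem_univ i)
  · positivity

/-- A point whose coordinates lie strictly between the bounds is in the interior of the box. -/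
lemma mem_interior_boxE' {n : ℕ} (a b : Fin n → ℝ) (z : EuclideanSpace ℝ (Fin n))
    (i₀ : Fin n) (h : ∀ i, a i < z i ∧ z i < b i) : z ∈ interior (boxE n a b) := by
  set ρ := Finset.univ.inf' (Finset.univ_nonempty_iff.mpr ⟨i₀⟩)
    (fun i => min (z i - a i) (b i - z i)) with hρdef
  have hρ : 0 < ρ := by
    rw [hρdef, Finset.lt_inf'_iff]
    intro i _
    exact lt_min (by linarith [(h i).1]) (by linarith [(h i).2])
  rw [mem_interior]
  refine ⟨Metric.ball z ρ, ?_, Metric.isOpen_ball, Metric.mem_ball_self hρ⟩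
  intro w hw i
  have h1 : |w i - z i| ≤ ‖w - z‖ := by simpa using coordAbs (w - z) i
  have h2 : ‖w - z‖ < ρ := by rw [← dist_eq_norm]; exact Metric.mem_ball.mp hw
  have h3 : ρ ≤ min (z i - a i) (b i - z i) := Finset.inf'_le _ (Finset.mem_univ i)
  have h4 := abs_lt.mp (lt_of_le_of_lt h1 (lt_of_lt_of_le h2 h3))
  have h5 : min (z i - a i) (b i - z i) ≤ z i - a i := min_le_left _ _
  have h6 : min (z i - a i) (b i - z i) ≤ b i - z i := min_le_right _ _
  exact ⟨by linarith [h4.1], by linarith [h4.2]⟩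

/-- If the interiors of two boxes are disjoint, a point of the first box cannot lie in the
interior of the second box. -/
lemma not_mem_box_and_interior {n : ℕ} (a b a' b' : Fin n → ℝ) (i₀ : Fin n)
    (hab : ∀ i, a i < b i)
    (hd : interior (boxE n a b) ∩ interior (boxE n a' b') = ∅)
    (x : EuclideanSpace ℝ (Fin n)) (hx : x ∈ boxE n a b)
    (hx' : x ∈ interior (boxE n a' b')) : False := by
  obtain ⟨r, hr, hball⟩ := Metric.isOpen_iff.mp isOpen_interior x hx'
  set m : EuclideanSpace ℝ (Fin n) := WithLp.toLp 2 (fun i => (a i + b i) / 2) with hm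
  set δ : ℝ := min (1/2 : ℝ) (r / (2 * (‖m - x‖ + 1))) with hδdef
  have hnn : (0:ℝ) ≤ ‖m - x‖ := norm_nonneg _
  have hδpos : 0 < δ := lt_min (by norm_num) (by positivity)
  have hδle : δ ≤ 1/2 := min_le_left _ _
  set z : EuclideanSpace ℝ (Fin n) := x + δ • (m - x) with hz
  have hzball : z ∈ Metric.ball x r := by
    rw [Metric.mem_ball, dist_eq_norm]
    have hzx : z - x = δ • (m - x) := by rw [hz]; abel
    rw [hzx, norm_smul, Real.norm_eq_abs, abs_of_pos hδpos]
    have h1 : δ ≤ r / (2 * (‖m - x‖ + 1)) := min_le_right _ _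
    calc δ * ‖m - x‖ ≤ (r / (2 * (‖m - x‖ + 1))) * ‖m - x‖ :=
          mul_le_mul_of_nonneg_right h1 hnn
    _ < r := by
        rw [div_mul_eq_mul_div, div_lt_iff₀ (by positivity)]
        nlinarith
  have hzint : z ∈ interior (boxE n a b) := by
    apply mem_interior_boxE' a b z i₀
    intro i
    have hzi : z i = x i + δ * (m i - x i) := rfl
    have hmi : m i = (a i + b i)/2 := rfl
    obtain ⟨h1', h2'⟩ := hx i
    have hab' := hab i
    have e1 : (0:ℝ) ≤ (1 - δ) * (x i - a i) := mul_nonneg (by linarith) (by linarith)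
    have e2 : (0:ℝ) ≤ (1 - δ) * (b i - x i) := mul_nonneg (by linarith) (by linarith)
    have e3 : (0:ℝ) < δ * ((b i - a i)/2) := mul_pos hδpos (by linarith)
    constructor
    · rw [hzi, hmi]; nlinarith
    · rw [hzi, hmi]; nlinarith
  have : z ∈ interior (boxE n a b) ∩ interior (boxE n a' b') := ⟨hzint, hball hzball⟩
  rw [hd] at this
  exact this

/-- Uniqueness of solutions of a locally Lipschitz autonomous ODE on `[0, T]`. -/
lemma sol_uniqueE {n : ℕ} (f : EuclideanSpace ℝ (Fin n) → EuclideanSpace ℝ (Fin n))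
    (hLip : ∀ x : EuclideanSpace ℝ (Fin n), ∃ U : Set (EuclideanSpace ℝ (Fin n)),
      IsOpen U ∧ x ∈ U ∧ ∃ L : ℝ, ∀ x₁ ∈ U, ∀ x₂ ∈ U, ‖f x₁ - f x₂‖ ≤ L * ‖x₁ - x₂‖)
    {y₁ y₂ : ℝ → EuclideanSpace ℝ (Fin n)} {T : ℝ}
    (h₁ : IsSolOnE n f y₁ (Icc 0 T)) (h₂ : IsSolOnE n f y₂ (Icc 0 T))
    (h0 : y₁ 0 = y₂ 0) : EqOn y₁ y₂ (Icc 0 T) := by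
  intro t ht
  have hT : (0:ℝ) ≤ T := le_trans ht.1 ht.2
  set A : Set ℝ := {u | u ∈ Icc (0:ℝ) T ∧ ∀ s ∈ Icc (0:ℝ) u, y₁ s = y₂ s} with hA
  have h0A : (0:ℝ) ∈ A := ⟨⟨le_refl _, hT⟩, fun s hs => by
    have hs0 : s = 0 := le_antisymm hs.2 hs.1
    rw [hs0]; exact h0⟩
  have hAne : A.Nonempty := ⟨0, h0A⟩
  have hbdd : BddAbove A := ⟨T, fun u hu => hu.1.2⟩
  set τ := sSup A with hτ
  have hτ0 : 0 ≤ τ := le_csSup hbdd h0A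
  have hτT : τ ≤ T := csSup_le hAne fun u hu => hu.1.2
  have hlt : ∀ s, 0 ≤ s → s < τ → y₁ s = y₂ s := by
    intro s hs0 hsτ
    obtain ⟨u, huA, hsu⟩ := exists_lt_of_lt_csSup hAne hsτ
    exact huA.2 s ⟨hs0, le_of_lt hsu⟩
  have hτeq : y₁ τ = y₂ τ := by
    rcases eq_or_lt_of_le hτ0 with h | h
    · rw [← h]; exact h0
    · have hc₁ : ContinuousAt y₁ τ := (h₁ τ ⟨hτ0, hτT⟩).continuousAt
      have hc₂ : ContinuousAt y₂ τ := (h₂ τ ⟨hτ0, hτT⟩).continuousAt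
      haveI hnb : (𝓝[Ioo (0:ℝ) τ] τ).NeBot := right_nhdsWithin_Ioo_neBot h
      exact tendsto_nhds_unique_of_eventuallyEq
        (hc₁.continuousWithinAt (s := Ioo (0:ℝ) τ))
        (hc₂.continuousWithinAt (s := Ioo (0:ℝ) τ))
        (eventually_nhdsWithin_of_forall fun s (hs : s ∈ Ioo (0:ℝ) τ) =>
          hlt s (le_of_lt hs.1) hs.2)
  have hAτ : ∀ s ∈ Icc (0:ℝ) τ, y₁ s = y₂ s := fun s hs => by
    rcases eq_or_lt_of_le hs.2 with h | h
    · rw [h]; exact hτeq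
    · exact hlt s hs.1 h
  rcases eq_or_lt_of_le hτT with hEq | hτltT
  · exact hAτ t ⟨ht.1, hEq ▸ ht.2⟩
  · exfalso
    obtain ⟨U, hUopen, hUx, L, hL⟩ := hLip (y₁ τ)
    have hUx₂ : y₂ τ ∈ U := hτeq ▸ hUx
    have hV : (y₁ ⁻¹' U ∩ y₂ ⁻¹' U) ∈ 𝓝 τ :=
      Filter.inter_mem
        ((h₁ τ ⟨hτ0, hτT⟩).continuousAt.preimage_mem_nhds (hUopen.mem_nhds hUx))
        ((h₂ τ ⟨hτ0, hτT⟩).continuousAt.preimage_mem_nhds (hUopen.mem_nhds hUx₂))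
    obtain ⟨δ₀, hδ₀, hball⟩ := Metric.mem_nhds_iff.mp hV
    set δ := min (δ₀/2) (T - τ) with hδ
    have hδpos : 0 < δ := lt_min (by linarith) (by linarith)
    have hδle1 : δ ≤ δ₀/2 := min_le_left _ _
    have hδle2 : δ ≤ T - τ := min_le_right _ _
    have hsub : Icc τ (τ+δ) ⊆ Metric.ball τ δ₀ := fun u hu => by
      rw [Metric.mem_ball, Real.dist_eq, abs_lt]
      exact ⟨by linarith [hu.1], by linarith [hu.2]⟩
    have hsubT : Icc τ (τ+δ) ⊆ Icc 0 T := fun u hu =>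
      ⟨le_trans hτ0 hu.1, le_trans hu.2 (by linarith)⟩
    have hKf : ∀ _t : ℝ, LipschitzOnWith L.toNNReal f U := fun _ => by
      apply LipschitzOnWith.of_dist_le_mul
      intro p hp q hq
      rw [dist_eq_norm, dist_eq_norm]
      calc ‖f p - f q‖ ≤ L * ‖p - q‖ := hL p hp q hq
      _ ≤ (L.toNNReal : ℝ) * ‖p - q‖ :=
        mul_le_mul_of_nonneg_right (Real.le_coe_toNNReal L) (norm_nonneg _)
    have heq := ODE_solution_unique_of_mem_Icc_right
      (v := fun _ => f) (s := fun _ => U) (fun t _ => hKf t)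
      (fun u hu => (h₁ u (hsubT hu)).continuousAt.continuousWithinAt)
      (fun u hu => (h₁ u (hsubT (Ico_subset_Icc_self hu))).hasDerivWithinAt)
      (fun u hu => (hball (hsub (Ico_subset_Icc_self hu))).1)
      (fun u hu => (h₂ u (hsubT hu)).continuousAt.continuousWithinAt)
      (fun u hu => (h₂ u (hsubT (Ico_subset_Icc_self hu))).hasDerivWithinAt)
      (fun u hu => (hball (hsub (Ico_subset_Icc_self hu))).2)
      hτeq
    have hmem : τ + δ ∈ A := by
      refine ⟨⟨by linarith, by linarith⟩, fun s hs => ?_⟩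
      rcases le_or_gt s τ with h | h
      · exact hAτ s ⟨hs.1, h⟩
      · exact heq ⟨le_of_lt h, hs.2⟩
    have : τ + δ ≤ τ := le_csSup hbdd hmem
    linarith

/-- Focal subsets associated with distinct targets in `Facets(H) ∪ {∅}` are pairwise
disjoint, for a locally Lipschitz vector field `f`: if `H`, `H'₁`, `H'₂` are rectangles
with pairwise disjoint interiors such that `F₁ = H ∩ H'₁` and `F₂ = H ∩ H'₂` are distinct
facets of `H`, then `Focal(H,E,F₁) ∩ Focal(H,E,F₂) = ∅` and
`Focal(H,E,∅) ∩ Focal(H,E,F₁) = ∅`. -/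
theorem focal_disjoint (n : ℕ)
    (f : EuclideanSpace ℝ (Fin n) → EuclideanSpace ℝ (Fin n))
    (hLip : ∀ x : EuclideanSpace ℝ (Fin n), ∃ U : Set (EuclideanSpace ℝ (Fin n)),
      IsOpen U ∧ x ∈ U ∧ ∃ L : ℝ, ∀ x₁ ∈ U, ∀ x₂ ∈ U, ‖f x₁ - f x₂‖ ≤ L * ‖x₁ - x₂‖)
    (a b a₁ b₁ a₂ b₂ : Fin n → ℝ)
    (hab : ∀ i, a i < b i) (hab₁ : ∀ i, a₁ i < b₁ i) (hab₂ : ∀ i, a₂ i < b₂ i)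
    (E : Set (EuclideanSpace ℝ (Fin n))) (hE : E ⊆ boxE n a b)
    (hd₁ : interior (boxE n a b) ∩ interior (boxE n a₁ b₁) = ∅)
    (hd₂ : interior (boxE n a b) ∩ interior (boxE n a₂ b₂) = ∅)
    (hd₁₂ : interior (boxE n a₁ b₁) ∩ interior (boxE n a₂ b₂) = ∅)
    (i₁ : Fin n) (s₁ : Bool) (i₂ : Fin n) (s₂ : Bool)
    (hF₁ : boxE n a b ∩ boxE n a₁ b₁ = facetE n a b i₁ s₁)
    (hF₂ : boxE n a b ∩ boxE n a₂ b₂ = facetE n a b i₂ s₂)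
    (hne : facetE n a b i₁ s₁ ≠ facetE n a b i₂ s₂) :
    focalFacetE n f a b a₁ b₁ E i₁ s₁ ∩ focalFacetE n f a b a₂ b₂ E i₂ s₂ = ∅ ∧
    focalStayE n f a b E ∩ focalFacetE n f a b a₁ b₁ E i₁ s₁ = ∅ := by
  constructor
  · rw [eq_empty_iff_forall_notMem]
    rintro x ⟨⟨-, y₁, hy₁0, ε₁, ε₁', c₁, hε₁, hε₁', hc₁, hsol₁, hbox₁, -, -, hnb₁⟩,
      ⟨-, y₂, hy₂0, ε₂, ε₂', c₂, hε₂, hε₂', hc₂, hsol₂, hbox₂, -, -, hnb₂⟩⟩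
    set T := min (c₁ + ε₁') (c₂ + ε₂') with hTdef
    have hsub₁ : Icc (0:ℝ) T ⊆ Icc 0 (c₁ + ε₁') :=
      Icc_subset_Icc le_rfl (min_le_left _ _)
    have hsub₂ : Icc (0:ℝ) T ⊆ Icc 0 (c₂ + ε₂') :=
      Icc_subset_Icc le_rfl (min_le_right _ _)
    have heq : EqOn y₁ y₂ (Icc 0 T) :=
      sol_uniqueE f hLip (fun t ht => hsol₁ t (hsub₁ ht)) (fun t ht => hsol₂ t (hsub₂ ht))
        (by rw [hy₁0, hy₂0])
    rcases lt_trichotomy c₁ c₂ with hcc | hcc | hcc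
    · set t := min ((c₁ + c₂)/2) (c₁ + ε₁'/2) with htdef
      have ht1 : c₁ < t := lt_min (by linarith) (by linarith)
      have ht2 : t < c₂ := lt_of_le_of_lt (min_le_left _ _) (by linarith)
      have ht3 : t < c₁ + ε₁' := lt_of_le_of_lt (min_le_right _ _) (by linarith)
      have htT : t ∈ Icc (0:ℝ) T :=
        ⟨by linarith, le_min (by linarith) (by linarith)⟩
      have hmem₁ : y₁ t ∈ interior (boxE n a₁ b₁) := hnb₁ t ⟨ht1, ht3⟩
      have hmem₂ : y₂ t ∈ boxE n a b := hbox₂ t ⟨by linarith, ht2⟩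
      rw [← heq htT] at hmem₂
      exact not_mem_box_and_interior a b a₁ b₁ i₁ hab hd₁ (y₁ t) hmem₂ hmem₁
    · set t := c₁ + (min ε₁' ε₂')/2 with htdef
      have hm : 0 < min ε₁' ε₂' := lt_min hε₁' hε₂'
      have ht1 : c₁ < t := by simp only [htdef]; linarith
      have ht3 : t < c₁ + ε₁' := by
        have := min_le_left ε₁' ε₂'; simp only [htdef]; linarith
      have ht4 : t < c₂ + ε₂' := by
        have := min_le_right ε₁' ε₂'; simp only [htdef]; rw [← hcc]; linarith
      have htT : t ∈ Icc (0:ℝ) T :=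
        ⟨by linarith, le_min (le_of_lt ht3) (le_of_lt ht4)⟩
      have hmem₁ : y₁ t ∈ interior (boxE n a₁ b₁) := hnb₁ t ⟨ht1, ht3⟩
      have hmem₂ : y₂ t ∈ interior (boxE n a₂ b₂) := hnb₂ t ⟨by rw [← hcc]; exact ht1, ht4⟩
      rw [← heq htT] at hmem₂
      have : y₁ t ∈ interior (boxE n a₁ b₁) ∩ interior (boxE n a₂ b₂) := ⟨hmem₁, hmem₂⟩
      rw [hd₁₂] at this
      exact this
    · set t := min ((c₂ + c₁)/2) (c₂ + ε₂'/2) with htdef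
      have ht1 : c₂ < t := lt_min (by linarith) (by linarith)
      have ht2 : t < c₁ := lt_of_le_of_lt (min_le_left _ _) (by linarith)
      have ht3 : t < c₂ + ε₂' := lt_of_le_of_lt (min_le_right _ _) (by linarith)
      have htT : t ∈ Icc (0:ℝ) T :=
        ⟨by linarith, le_min (by linarith) (by linarith)⟩
      have hmem₂ : y₂ t ∈ interior (boxE n a₂ b₂) := hnb₂ t ⟨ht1, ht3⟩
      have hmem₁ : y₁ t ∈ boxE n a b := hbox₁ t ⟨by linarith, ht2⟩
      rw [heq htT] at hmem₁
      exact not_mem_box_and_interior a b a₂ b₂ i₁ hab hd₂ (y₂ t) hmem₁ hmem₂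
  · rw [eq_empty_iff_forall_notMem]
    rintro x ⟨⟨-, y₁, hy₁0, hsol₁, hbox₁⟩,
      ⟨-, y₂, hy₂0, ε, ε', c, hε, hε', hc, hsol₂, -, -, -, hnb₂⟩⟩
    have heq : EqOn y₁ y₂ (Icc 0 (c + ε')) :=
      sol_uniqueE f hLip (fun t ht => hsol₁ t ht.1) hsol₂ (by rw [hy₁0, hy₂0])
    set t := c + ε'/2 with htdef
    have ht1 : c < t := by rw [htdef]; linarith
    have ht2 : t < c + ε' := by rw [htdef]; linarith
    have htT : t ∈ Icc (0:ℝ) (c + ε') := ⟨by linarith, by linarith⟩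
    have hmem₂ : y₂ t ∈ interior (boxE n a₁ b₁) := hnb₂ t ⟨ht1, ht2⟩
    have hmem₁ : y₁ t ∈ boxE n a b := hbox₁ t (by linarith)
    rw [heq htT] at hmem₁
    exact not_mem_box_and_interior a b a₁ b₁ i₁ hab hd₁ (y₂ t) hmem₁ hmem₂
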